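/- The total variation distance between the hypergeometric distribution H(n, m, k) (drawing k balls from n with m red) and the binomial distribution B(k, m/n) is at most k/n. -/

import Mathlib

set_option linter.unusedSectionVars false
set_option linter.unusedTactic false

/-- The hypergeometric pmf: probability of `i` red balls when drawing `k` balls
without replacement from `n` balls, `m` of which are red. -/
noncomputable def hypPMF (n m k i : ℕ) : ℝ :=
  ((m.choose i : ℝ) * ((n - m).choose (k - i) : ℝ)) / (n.choose k : ℝ)

/-- The binomial pmf with `k` trials and success probability `p`. -/
noncomputable def binPMF (k : ℕ) (p : ℝ) (i : ℕ) : ℝ :=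
  (k.choose i : ℝ) * p ^ i * (1 - p) ^ (k - i)

namespace TV14
open Finset

/-- Vandermonde in range form. -/
lemma vander (a b k : ℕ) :
    ∑ x ∈ range (k+1), a.choose x * b.choose (k-x) = (a+b).choose k := by
  rw [Nat.add_choose_eq, Finset.Nat.sum_antidiagonal_eq_sum_range_succ_mk]

section Main

variable (n m k : ℕ)

noncomputable def pp : ℝ := (m : ℝ) / n
noncomputable def qq : ℝ := 1 - pp n m
noncomputable def bb (x : ℕ) : ℝ := (k.choose x : ℝ) * (pp n m) ^ x * (qq n m) ^ (k - x)
noncomputable def hh (x : ℕ) : ℝ := hypPMF n m k x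
noncomputable def cc (x : ℕ) : ℝ :=
  pp n m * ((k:ℝ)-x) * hh n m k x - qq n m * ((x:ℝ)+1) * hh n m k (x+1)
noncomputable def CC (x : ℕ) : ℝ := ∑ y ∈ Finset.range (x+1), cc n m k y
noncomputable def AA : Finset ℕ :=
  (Finset.range (k+1)).filter (fun x => bb n m k x < hh n m k x)
noncomputable def bA : ℝ := ∑ x ∈ AA n m k, bb n m k x
noncomputable def gg (y : ℕ) : ℝ :=
  (if bb n m k y < hh n m k y then 1 else 0) - bA n m k
noncomputable def NN (x : ℕ) : ℝ := ∑ y ∈ Finset.range (x+1), bb n m k y * gg n m k y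
noncomputable def ff (z : ℕ) : ℝ :=
  NN n m k (z-1) / (pp n m * ((k:ℝ) - ((z-1 : ℕ):ℝ)) * bb n m k (z-1))

variable {n m k}

section Basic
variable (hm1 : 1 ≤ m) (hmn : m < n)

include hm1 hmn

lemma pp_pos : 0 < pp n m := by
  have h : (0:ℝ) < n := by exact_mod_cast Nat.pos_of_ne_zero (by omega)
  have h2 : (0:ℝ) < m := by exact_mod_cast hm1
  exact div_pos h2 h

lemma pp_lt_one : pp n m < 1 := by
  have h : (0:ℝ) < n := by exact_mod_cast Nat.pos_of_ne_zero (by omega)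
  rw [pp, div_lt_one h]
  exact_mod_cast hmn

lemma qq_pos : 0 < qq n m := by
  have := pp_lt_one hm1 hmn
  unfold qq; linarith

lemma qq_eq : qq n m = ((n - m : ℕ) : ℝ) / n := by
  have h : (0:ℝ) < n := by exact_mod_cast Nat.pos_of_ne_zero (by omega)
  rw [qq, pp, Nat.cast_sub (le_of_lt hmn)]
  field_simp

lemma bb_nonneg (x : ℕ) : 0 ≤ bb n m k x := by
  have h1 := pp_pos hm1 hmn
  have h2 := qq_pos hm1 hmn
  unfold bb; positivity

lemma bb_pos {x : ℕ} (hx : x ≤ k) : 0 < bb n m k x := by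
  have h1 := pp_pos hm1 hmn
  have h2 := qq_pos hm1 hmn
  have h3 : 0 < k.choose x := Nat.choose_pos hx
  have h3' : (0:ℝ) < k.choose x := by exact_mod_cast h3
  unfold bb; positivity

omit hm1 hmn in
lemma sum_bb : ∑ x ∈ range (k+1), bb n m k x = 1 := by
  have := add_pow (pp n m) (qq n m) k
  have hpq : pp n m + qq n m = 1 := by unfold qq; ring
  rw [hpq, one_pow] at this
  rw [this]
  refine Finset.sum_congr rfl fun x hx => ?_
  unfold bb; ring

/-- binomial recurrence -/
lemma bb_rec {x : ℕ} (hx : x < k) :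
    pp n m * ((k:ℝ) - x) * bb n m k x = qq n m * ((x:ℝ)+1) * bb n m k (x+1) := by
  unfold bb
  have h1 : k - x = (k - (x+1)) + 1 := by omega
  have h2 : (k.choose (x+1) : ℝ) * ((x:ℝ)+1) = (k.choose x : ℝ) * ((k:ℝ) - x) := by
    have := Nat.choose_succ_right_eq k x
    have hc : ((k.choose (x+1) * (x+1) : ℕ) : ℝ) = ((k.choose x * (k - x) : ℕ) : ℝ) := by
      exact_mod_cast congrArg (Nat.cast (R := ℝ)) this
    push_cast [Nat.cast_sub (le_of_lt hx)] at hc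
    push_cast
    linarith [hc]
  rw [h1, pow_succ, pow_succ]
  linear_combination (-(pp n m ^ x * pp n m * qq n m ^ (k - (x+1)) * qq n m)) * h2

end Basic

section Nat
/-- `(i+1) * C(a, i+1) = a * C(a-1, i)` for `1 ≤ a`. -/
lemma mul_choose_aux (a i : ℕ) (ha : 1 ≤ a) :
    (i+1) * a.choose (i+1) = a * (a-1).choose i := by
  have h2 : a - 1 + 1 = a := by omega
  have h := Nat.add_one_mul_choose_eq (a-1) i
  simp only [Nat.succ_eq_add_one, h2] at h
  rw [h]; ring

lemma vander1 (a b k : ℕ) (ha : 1 ≤ a) (hk : 1 ≤ k) :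
    ∑ x ∈ range (k+1), x * (a.choose x * b.choose (k-x))
      = a * (a+b-1).choose (k-1) := by
  rw [Finset.sum_range_succ']
  simp only [Nat.zero_eq, zero_mul, add_zero]
  have h : ∀ i ∈ range k, (i+1) * (a.choose (i+1) * b.choose (k-(i+1)))
      = a * ((a-1).choose i * b.choose ((k-1)-i)) := by
    intro i _
    have h1 : k - (i+1) = (k-1) - i := by omega
    rw [h1, ← mul_assoc, mul_choose_aux a i ha, mul_assoc]
  rw [Finset.sum_congr rfl h, ← Finset.mul_sum]
  have h3 : a - 1 + b = a + b - 1 := by omega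
  have hrange : range k = range ((k-1)+1) := by congr 1; omega
  rw [hrange, vander (a-1) b (k-1), h3]

lemma vander2 (a b k : ℕ) (ha : 2 ≤ a) (hk : 2 ≤ k) :
    ∑ x ∈ range (k+1), (x*(x-1)) * (a.choose x * b.choose (k-x))
      = (a*(a-1)) * (a+b-2).choose (k-2) := by
  rw [Finset.sum_range_succ']
  have hrange : range k = range ((k-1)+1) := by congr 1; omega
  rw [hrange, Finset.sum_range_succ']
  simp only [zero_mul, Nat.mul_zero, add_zero, Nat.sub_self, mul_zero, Nat.zero_mul,
    Nat.add_sub_cancel, one_mul, Nat.choose_one_right]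
  have h : ∀ j ∈ range (k-1), ((j+1+1)*(j+1)) * (a.choose (j+1+1) * b.choose (k-(j+1+1)))
      = (a*(a-1)) * ((a-2).choose j * b.choose ((k-2)-j)) := by
    intro j _
    have h1 : k-(j+1+1) = (k-2) - j := by omega
    rw [h1]
    have e1 : (j+2) * a.choose (j+2) = a * (a-1).choose (j+1) := mul_choose_aux a (j+1) (by omega)
    have e2 : (j+1) * (a-1).choose (j+1) = (a-1) * (a-2).choose j := by
      have := mul_choose_aux (a-1) j (by omega)
      have h3 : a - 1 - 1 = a - 2 := by omega
      rwa [h3] at this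
    calc (j+1+1)*(j+1) * (a.choose (j+1+1) * b.choose (k-2-j))
        = ((j+2) * a.choose (j+2)) * (j+1) * b.choose (k-2-j) := by ring_nf
      _ = (a * (a-1).choose (j+1)) * (j+1) * b.choose (k-2-j) := by rw [e1]
      _ = a * ((j+1) * (a-1).choose (j+1)) * b.choose (k-2-j) := by ring
      _ = a * ((a-1) * (a-2).choose j) * b.choose (k-2-j) := by rw [e2]
      _ = (a*(a-1)) * ((a-2).choose j * b.choose (k-2-j)) := by ring
  rw [Finset.sum_congr rfl h, ← Finset.mul_sum]
  have h3 : a - 2 + b = a + b - 2 := by omega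
  have hrange2 : range (k-1) = range ((k-2)+1) := by congr 1; omega
  rw [hrange2, vander (a-2) b (k-2), h3]
end Nat

section Hyp
variable {n m k : ℕ}
variable (hmn : m < n) (hkn : k ≤ n)

include hkn in
lemma choose_n_k_pos : (0:ℝ) < (n.choose k : ℝ) := by
  exact_mod_cast Nat.choose_pos hkn

lemma hh_nonneg (x : ℕ) : 0 ≤ hh n m k x := by
  unfold hh hypPMF; positivity

include hmn hkn in
lemma sum_hh : ∑ x ∈ range (k+1), hh n m k x = 1 := by
  have hc := choose_n_k_pos (n := n) hkn
  unfold hh hypPMF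
  rw [← Finset.sum_div, div_eq_one_iff_eq (ne_of_gt hc)]
  have : ∑ x ∈ range (k+1), (m.choose x : ℝ) * ((n-m).choose (k-x) : ℝ)
      = ((∑ x ∈ range (k+1), m.choose x * (n-m).choose (k-x) : ℕ) : ℝ) := by
    push_cast; ring_nf
  rw [this, vander m (n-m) k]
  congr 2
  omega

include hmn hkn in
lemma sum_x_hh (hm1 : 1 ≤ m) (hk1 : 1 ≤ k) :
    ∑ x ∈ range (k+1), (x:ℝ) * hh n m k x = (k:ℝ) * pp n m := by
  have hc := choose_n_k_pos (n := n) hkn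
  unfold hh hypPMF
  have step : ∑ x ∈ range (k+1), (x:ℝ) * ((m.choose x : ℝ) * ((n-m).choose (k-x) : ℝ) / (n.choose k : ℝ))
      = ((∑ x ∈ range (k+1), x * (m.choose x * (n-m).choose (k-x)) : ℕ) : ℝ) / (n.choose k : ℝ) := by
    rw [Nat.cast_sum, Finset.sum_div]
    refine Finset.sum_congr rfl fun x hx => ?_
    push_cast; ring
  rw [step, vander1 m (n-m) k hm1 hk1]
  have h3 : m + (n - m) - 1 = n - 1 := by omega
  rw [h3]
  have key : n * (m * (n-1).choose (k-1)) = k * m * n.choose k := by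
    have h4 : k - 1 + 1 = k := by omega
    have e1 := mul_choose_aux n (k-1) (by omega)
    rw [h4] at e1
    calc n * (m * (n-1).choose (k-1)) = m * (n * (n-1).choose (k-1)) := by ring
      _ = m * (k * n.choose k) := by rw [← e1]
      _ = k * m * n.choose k := by ring
  have hn0 : (0:ℝ) < n := by exact_mod_cast Nat.pos_of_ne_zero (by omega)
  have keyR : (n:ℝ) * ((m * (n-1).choose (k-1) : ℕ) : ℝ) = ((k * m * n.choose k : ℕ) : ℝ) := by
    exact_mod_cast congrArg (Nat.cast (R := ℝ)) key
  push_cast at keyR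
  rw [pp]
  field_simp
  push_cast
  linear_combination keyR

include hmn hkn in
lemma sum_xx_hh (hm1 : 1 ≤ m) (hk1 : 1 ≤ k) :
    ∑ x ∈ range (k+1), (x:ℝ) * ((x:ℝ)-1) * hh n m k x
      = (k:ℝ) * ((k:ℝ)-1) * pp n m * ((m:ℝ)-1) / ((n:ℝ)-1) := by
  have hc := choose_n_k_pos (n := n) hkn
  have hn1 : (1:ℝ) < (n:ℝ) := by exact_mod_cast (by omega : 1 < n)
  by_cases hk2 : k ≤ 1
  · have hk1' : k = 1 := by omega
    subst hk1'
    rw [Finset.sum_range_succ, Finset.sum_range_succ, Finset.sum_range_zero]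
    norm_num
  by_cases hm2 : m ≤ 1
  · have hm1' : m = 1 := by omega
    subst hm1'
    have hz : ∀ x ∈ range (k+1), (x:ℝ) * ((x:ℝ)-1) * hh n 1 k x = 0 := by
      intro x hx
      rcases Nat.lt_or_ge x 2 with h | h
      · interval_cases x <;> norm_num
      · have hcz : (Nat.choose 1 x : ℝ) = 0 := by
          rw [Nat.choose_eq_zero_of_lt (by omega)]; simp
        unfold hh hypPMF; rw [hcz]; ring
    rw [Finset.sum_congr rfl hz]
    simp
  push_neg at hk2 hm2
  unfold hh hypPMF
  have step : ∑ x ∈ range (k+1), (x:ℝ) * ((x:ℝ)-1) * ((m.choose x : ℝ) * ((n-m).choose (k-x) : ℝ) / (n.choose k : ℝ))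
      = ((∑ x ∈ range (k+1), (x*(x-1)) * (m.choose x * (n-m).choose (k-x)) : ℕ) : ℝ) / (n.choose k : ℝ) := by
    rw [Nat.cast_sum, Finset.sum_div]
    refine Finset.sum_congr rfl fun x hx => ?_
    rcases Nat.eq_zero_or_pos x with h | h
    · subst h; simp
    · have hx1 : ((x - 1 : ℕ) : ℝ) = (x:ℝ) - 1 := by
        rw [Nat.cast_sub h]; simp
      push_cast [hx1]; ring
  rw [step, vander2 m (n-m) k (by omega) (by omega)]
  have h3 : m + (n - m) - 2 = n - 2 := by omega
  rw [h3]
  have key : (n*(n-1)) * ((m*(m-1)) * (n-2).choose (k-2)) = (k*(k-1)) * (m*(m-1)) * n.choose k := by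
    have h4 : k - 1 + 1 = k := by omega
    have e1 := mul_choose_aux n (k-1) (by omega)
    rw [h4] at e1
    have h5 : k - 2 + 1 = k - 1 := by omega
    have h6 : n - 1 - 1 = n - 2 := by omega
    have e2 := mul_choose_aux (n-1) (k-2) (by omega)
    rw [h5, h6] at e2
    calc (n*(n-1)) * ((m*(m-1)) * (n-2).choose (k-2))
        = (m*(m-1)) * (n * ((n-1) * (n-2).choose (k-2))) := by ring
      _ = (m*(m-1)) * (n * ((k-1) * (n-1).choose (k-1))) := by rw [← e2]
      _ = (m*(m-1)) * ((k-1) * (n * (n-1).choose (k-1))) := by ring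
      _ = (m*(m-1)) * ((k-1) * (k * n.choose k)) := by rw [← e1]
      _ = (k*(k-1)) * (m*(m-1)) * n.choose k := by ring
  have keyR : ((n:ℝ)*((n:ℝ)-1)) * (((m:ℝ)*((m:ℝ)-1)) * ((n-2).choose (k-2) : ℝ))
      = ((k:ℝ)*((k:ℝ)-1)) * ((m:ℝ)*((m:ℝ)-1)) * (n.choose k : ℝ) := by
    have hcast := congrArg (Nat.cast (R := ℝ)) key
    push_cast [Nat.cast_sub (by omega : 1 ≤ n), Nat.cast_sub (by omega : 1 ≤ m),
      Nat.cast_sub (by omega : 1 ≤ k)] at hcast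
    linarith [hcast]
  have hn0 : (0:ℝ) < n := by linarith
  have hcast2 : ((m*(m-1) * (n-2).choose (k-2) : ℕ) : ℝ)
      = (m:ℝ)*((m:ℝ)-1) * ((n-2).choose (k-2) : ℝ) := by
    push_cast [Nat.cast_sub (by omega : 1 ≤ m)]; ring
  rw [hcast2, pp]
  rw [div_eq_div_iff (ne_of_gt hc) (by intro hz; linarith [hz] : ((n:ℝ)-1) ≠ 0)]
  field_simp
  have hm0 : (m:ℝ) ≠ 0 := by exact_mod_cast (by omega : m ≠ 0)
  have keyR2 := mul_left_cancel₀ hm0 (by linear_combination keyR :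
    (m:ℝ) * ((n:ℝ)*((n:ℝ)-1)*(((m:ℝ)-1)*((n-2).choose (k-2) : ℝ)))
      = (m:ℝ) * ((k:ℝ)*((k:ℝ)-1)*((m:ℝ)-1)*(n.choose k : ℝ)))
  linear_combination keyR2

end Hyp

lemma choose_signed (a x : ℕ) :
    ((x:ℝ)+1) * (a.choose (x+1) : ℝ) = ((a:ℝ) - x) * (a.choose x : ℝ) := by
  rcases Nat.lt_or_ge x a with h | h
  · have hid := Nat.choose_succ_right_eq a x
    have hc : ((a.choose (x+1) * (x+1) : ℕ):ℝ) = ((a.choose x * (a-x) : ℕ):ℝ) := by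
      exact_mod_cast congrArg (Nat.cast (R := ℝ)) hid
    push_cast [Nat.cast_sub (le_of_lt h)] at hc
    linarith
  · have h1 : a.choose (x+1) = 0 := Nat.choose_eq_zero_of_lt (by omega)
    rw [h1]
    rcases Nat.eq_or_lt_of_le h with h2 | h2
    · rw [← h2]; simp
    · rw [Nat.choose_eq_zero_of_lt h2]; simp

section Rec
variable {n m k : ℕ}
variable (hmn : m < n) (hkn : k ≤ n)

include hmn hkn in
lemma hh_rec {x : ℕ} (hx : x < k) :
    ((n:ℝ)-m-k+x+1) * (((x:ℝ)+1) * hh n m k (x+1))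
      = ((m:ℝ)-x) * (((k:ℝ)-x) * hh n m k x) := by
  have hc := choose_n_k_pos (n := n) hkn
  obtain ⟨j, hj⟩ : ∃ j, k - x = j + 1 := ⟨k - x - 1, by omega⟩
  have hx1 : k - (x+1) = j := by omega
  have s1 := choose_signed m x
  have s2R := choose_signed (n-m) j
  have c2 : ((n-m : ℕ):ℝ) = (n:ℝ) - m := by
    push_cast [Nat.cast_sub (le_of_lt hmn)]; ring
  have c1 : (j:ℝ) = (k:ℝ) - x - 1 := by
    have hjk : j + x + 1 = k := by omega
    have : ((j:ℝ)) + x + 1 = k := by exact_mod_cast hjk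
    linarith
  rw [c2] at s2R
  have s2' : ((k:ℝ)-(x:ℝ)) * (((n-m).choose (j+1)) : ℝ)
      = ((n:ℝ)-(m:ℝ)-(k:ℝ)+(x:ℝ)+1) * (((n-m).choose j) : ℝ) := by
    linear_combination s2R - ((((n-m).choose j) : ℝ) + (((n-m).choose (j+1)) : ℝ)) * c1
  unfold hh hypPMF
  rw [hx1, hj]
  field_simp
  linear_combination (((n:ℝ)-m-k+x+1) * (((n-m).choose j) : ℝ)) * s1
    - (((m:ℝ)-x) * ((m.choose x) : ℝ)) * s2'

include hmn hkn in
lemma c_id {x : ℕ} (hx : x < k) :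
    ((n:ℝ)-m-k+x+1) * cc n m k x
      = ((k:ℝ)-x) * hh n m k x * ((x:ℝ) - ((k:ℝ)-1) * pp n m) := by
  have hr := hh_rec hmn hkn hx
  have hn0 : (0:ℝ) < n := by exact_mod_cast Nat.pos_of_ne_zero (by omega)
  have aux : ((n:ℝ)-m-k+x+1) * pp n m - qq n m * ((m:ℝ)-x)
      = (x:ℝ) - ((k:ℝ)-1) * pp n m := by
    rw [qq, pp]
    field_simp
    ring
  unfold cc
  linear_combination (-(qq n m)) * hr + (((k:ℝ)-x) * hh n m k x) * aux

include hmn hkn in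
lemma c_nonneg (hm1 : 1 ≤ m) {x : ℕ} (hx : x < k)
    (hthr : ((k:ℝ)-1) * pp n m ≤ (x:ℝ)) : 0 ≤ cc n m k x := by
  have hn0 : (0:ℝ) < n := by exact_mod_cast Nat.pos_of_ne_zero (by omega)
  have hmR : (m:ℝ) + 1 ≤ (n:ℝ) := by exact_mod_cast hmn
  have hkR : (k:ℝ) ≤ (n:ℝ) := by exact_mod_cast hkn
  have hppd : ((k:ℝ)-1) * pp n m > (m:ℝ) + (k:ℝ) - (n:ℝ) - 1 := by
    rw [pp]
    rw [gt_iff_lt, show ((k:ℝ)-1) * ((m:ℝ)/n) = ((k:ℝ)-1)*(m:ℝ)/n by ring,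
      lt_div_iff₀ hn0]
    nlinarith
  have hd : (0:ℝ) < (n:ℝ)-m-k+x+1 := by linarith
  have hrhs : 0 ≤ ((k:ℝ)-x) * hh n m k x * ((x:ℝ) - ((k:ℝ)-1) * pp n m) := by
    have h1 : (0:ℝ) ≤ (k:ℝ)-x := by
      have : (x:ℝ) < k := by exact_mod_cast hx
      linarith
    have h2 := hh_nonneg (n := n) (m := m) (k := k) x
    have h3 : (0:ℝ) ≤ (x:ℝ) - ((k:ℝ)-1) * pp n m := by linarith
    positivity
  have := c_id hmn hkn (x := x) hx
  nlinarith [this, hd, hrhs]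

include hmn hkn in
lemma c_nonpos (hm1 : 1 ≤ m) {x : ℕ} (hx : x < k)
    (hthr : (x:ℝ) ≤ ((k:ℝ)-1) * pp n m) : cc n m k x ≤ 0 := by
  have hn0 : (0:ℝ) < n := by exact_mod_cast Nat.pos_of_ne_zero (by omega)
  rcases lt_or_ge (0:ℝ) ((n:ℝ)-m-k+x+1) with hd | hd
  · have hid := c_id hmn hkn (x := x) hx
    have hrhs : ((k:ℝ)-x) * hh n m k x * ((x:ℝ) - ((k:ℝ)-1) * pp n m) ≤ 0 := by
      have h1 : (0:ℝ) ≤ (k:ℝ)-x := by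
        have : (x:ℝ) < k := by exact_mod_cast hx
        linarith
      have h2 := hh_nonneg (n := n) (m := m) (k := k) x
      have h3 : (x:ℝ) - ((k:ℝ)-1) * pp n m ≤ 0 := by linarith
      exact mul_nonpos_of_nonneg_of_nonpos (by positivity) h3
    nlinarith [hid, hd, hrhs]
  · -- degenerate: hh x = 0
    have hnm : n + x + 1 ≤ m + k := by
      by_contra hcon
      push_neg at hcon
      have : ((n:ℝ)) + x + 1 ≥ (m:ℝ) + k + 1 := by exact_mod_cast hcon
      linarith
    have hz : ((n-m).choose (k-x) : ℝ) = 0 := by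
      rw [Nat.choose_eq_zero_of_lt (by omega)]
      simp
    have hhx : hh n m k x = 0 := by
      unfold hh hypPMF; rw [hz]; simp
    unfold cc
    rw [hhx]
    have h2 := hh_nonneg (n := n) (m := m) (k := k) (x+1)
    have hq := qq_pos hm1 hmn
    have hx1 : (0:ℝ) ≤ (x:ℝ)+1 := by positivity
    have hprod : 0 ≤ qq n m * ((x:ℝ)+1) * hh n m k (x+1) :=
      mul_nonneg (mul_nonneg (le_of_lt hq) hx1) h2
    linarith

include hmn hkn in
lemma sum_cc (hm1 : 1 ≤ m) (hk1 : 1 ≤ k) : ∑ x ∈ range k, cc n m k x = 0 := by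
  unfold cc
  rw [Finset.sum_sub_distrib]
  have e3 : ∑ x ∈ range k, pp n m * ((k:ℝ)-x) * hh n m k x
      = ∑ x ∈ range (k+1), pp n m * ((k:ℝ)-x) * hh n m k x := by
    rw [Finset.sum_range_succ]
    simp
  have e2 : ∑ x ∈ range k, qq n m * ((x:ℝ)+1) * hh n m k (x+1)
      = ∑ x ∈ range (k+1), qq n m * (x:ℝ) * hh n m k x := by
    rw [Finset.sum_range_succ' (fun x => qq n m * (x:ℝ) * hh n m k x) k]
    push_cast
    simp
  have e1 : ∑ x ∈ range (k+1), pp n m * ((k:ℝ)-x) * hh n m k x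
      = pp n m * (k:ℝ) * (∑ x ∈ range (k+1), hh n m k x)
        - pp n m * (∑ x ∈ range (k+1), (x:ℝ) * hh n m k x) := by
    rw [Finset.mul_sum, Finset.mul_sum, ← Finset.sum_sub_distrib]
    exact Finset.sum_congr rfl fun x hx => by ring
  have e4 : ∑ x ∈ range (k+1), qq n m * (x:ℝ) * hh n m k x
      = qq n m * (∑ x ∈ range (k+1), (x:ℝ) * hh n m k x) := by
    rw [Finset.mul_sum]
    exact Finset.sum_congr rfl fun x hx => by ring
  rw [e3, e2, e1, e4, sum_hh hmn hkn, sum_x_hh hmn hkn hm1 hk1, qq]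
  ring

include hmn hkn in
lemma sum_xcc (hm1 : 1 ≤ m) (hk1 : 1 ≤ k) :
    ∑ x ∈ range k, (x:ℝ) * cc n m k x
      = (k:ℝ)*((k:ℝ)-1) * pp n m * qq n m / ((n:ℝ)-1) := by
  have hn1 : (1:ℝ) < (n:ℝ) := by exact_mod_cast (by omega : 1 < n)
  have hn0 : (0:ℝ) < n := by linarith
  unfold cc
  have expand : ∀ x ∈ range k, (x:ℝ) * (pp n m * ((k:ℝ)-x) * hh n m k x - qq n m * ((x:ℝ)+1) * hh n m k (x+1))
      = (x:ℝ) * (pp n m * ((k:ℝ)-x) * hh n m k x) - (x:ℝ) * (qq n m * ((x:ℝ)+1) * hh n m k (x+1)) := by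
    intro x hx; ring
  rw [Finset.sum_congr rfl expand, Finset.sum_sub_distrib]
  have e3 : ∑ x ∈ range k, (x:ℝ) * (pp n m * ((k:ℝ)-x) * hh n m k x)
      = ∑ x ∈ range (k+1), (x:ℝ) * (pp n m * ((k:ℝ)-x) * hh n m k x) := by
    rw [Finset.sum_range_succ]
    simp
  have e2 : ∑ x ∈ range k, (x:ℝ) * (qq n m * ((x:ℝ)+1) * hh n m k (x+1))
      = ∑ x ∈ range (k+1), ((x:ℝ)-1) * (qq n m * (x:ℝ) * hh n m k x) := by
    rw [Finset.sum_range_succ' (fun x => ((x:ℝ)-1) * (qq n m * (x:ℝ) * hh n m k x)) k]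
    push_cast
    simp
  have e1 : ∑ x ∈ range (k+1), (x:ℝ) * (pp n m * ((k:ℝ)-x) * hh n m k x)
      = pp n m * (k:ℝ) * (∑ x ∈ range (k+1), (x:ℝ) * hh n m k x)
        - pp n m * (∑ x ∈ range (k+1), (x:ℝ)*((x:ℝ)-1) * hh n m k x)
        - pp n m * (∑ x ∈ range (k+1), (x:ℝ) * hh n m k x) := by
    rw [Finset.mul_sum, Finset.mul_sum, Finset.mul_sum, ← Finset.sum_sub_distrib,
      ← Finset.sum_sub_distrib]
    exact Finset.sum_congr rfl fun x hx => by ring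
  have e4 : ∑ x ∈ range (k+1), ((x:ℝ)-1) * (qq n m * (x:ℝ) * hh n m k x)
      = qq n m * (∑ x ∈ range (k+1), (x:ℝ)*((x:ℝ)-1) * hh n m k x) := by
    rw [Finset.mul_sum]
    exact Finset.sum_congr rfl fun x hx => by ring
  have hne1 : (n:ℝ) ≠ 0 := ne_of_gt hn0
  have hne2 : (n:ℝ) - 1 ≠ 0 := by intro hz; linarith
  rw [e3, e2, e1, e4, sum_x_hh hmn hkn hm1 hk1, sum_xx_hh hmn hkn hm1 hk1, qq, pp]
  field_simp
  ring

include hmn hkn in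
lemma CC_last (hm1 : 1 ≤ m) (hk1 : 1 ≤ k) : CC n m k (k-1) = 0 := by
  unfold CC
  have h : k - 1 + 1 = k := by omega
  rw [h]
  exact sum_cc hmn hkn hm1 hk1

include hmn hkn in
lemma CC_nonpos (hm1 : 1 ≤ m) (hk1 : 1 ≤ k) {x : ℕ} (hx : x < k) : CC n m k x ≤ 0 := by
  rcases lt_or_ge (x:ℝ) (((k:ℝ)-1) * pp n m) with hcase | hcase
  · apply Finset.sum_nonpos
    intro y hy
    rw [Finset.mem_range] at hy
    have hyk : y < k := by omega
    have hyx : (y:ℝ) ≤ (x:ℝ) := by exact_mod_cast (by omega : y ≤ x)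
    exact c_nonpos hmn hkn hm1 hyk (by linarith)
  · have h0 := Finset.sum_Ico_consecutive (cc n m k) (Nat.zero_le (x+1)) (by omega : x+1 ≤ k)
    have hCC : CC n m k x = ∑ y ∈ Finset.Ico 0 (x+1), cc n m k y := by
      unfold CC; rw [Finset.range_eq_Ico]
    have hall : ∑ y ∈ Finset.Ico 0 k, cc n m k y = 0 := by
      rw [← Finset.range_eq_Ico]; exact sum_cc hmn hkn hm1 hk1
    have hge : 0 ≤ ∑ y ∈ Finset.Ico (x+1) k, cc n m k y := by
      apply Finset.sum_nonneg
      intro y hy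
      rw [Finset.mem_Ico] at hy
      have hxy : (x:ℝ) ≤ (y:ℝ) := by exact_mod_cast (by omega : x ≤ y)
      exact c_nonneg hmn hkn hm1 hy.2 (by linarith)
    linarith

end Rec

section Bin
variable {n m k : ℕ}
variable (hm1 : 1 ≤ m) (hmn : m < n)

include hm1 hmn in
lemma qb_eq {y : ℕ} (hy : y ≤ k) :
    qq n m * bb n m k y = (((k:ℝ)+1-y)/((k:ℝ)+1)) * bb n m (k+1) y := by
  have hnat : (k+1) * k.choose y = (k+1-y) * (k+1).choose y := by
    have h1 := Nat.add_one_mul_choose_eq k y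
    have h2 := Nat.choose_succ_right_eq (k+1) y
    rw [h1, h2]
    ring
  have hcast : ((k+1-y:ℕ):ℝ) = (k:ℝ)+1-y := by
    push_cast [Nat.cast_sub (by omega : y ≤ k+1)]; ring
  have hcid : ((k:ℝ)+1) * (k.choose y : ℝ) = ((k:ℝ)+1-y) * ((k+1).choose y : ℝ) := by
    have := congrArg (Nat.cast (R := ℝ)) hnat
    push_cast [hcast] at this
    exact this
  unfold bb
  have hpow : qq n m ^ (k+1-y) = qq n m * qq n m ^ (k-y) := by
    rw [show k+1-y = (k-y)+1 by omega, pow_succ]; ring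
  have hk1 : (0:ℝ) < (k:ℝ)+1 := by positivity
  rw [hpow]
  field_simp
  linear_combination (pp n m ^ y * (qq n m * qq n m ^ (k-y))) * hcid

include hm1 hmn in
lemma pb_eq {y : ℕ} (hy : y ≤ k) :
    pp n m * bb n m k y = (((y:ℝ)+1)/((k:ℝ)+1)) * bb n m (k+1) (y+1) := by
  have hnat : (k+1) * k.choose y = (y+1) * (k+1).choose (y+1) := by
    have h1 := Nat.add_one_mul_choose_eq k y
    rw [h1]; ring
  have hcid : ((k:ℝ)+1) * (k.choose y : ℝ) = ((y:ℝ)+1) * ((k+1).choose (y+1) : ℝ) := by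
    exact_mod_cast congrArg (Nat.cast (R := ℝ)) hnat
  unfold bb
  have hsub : k+1-(y+1) = k-y := by omega
  rw [hsub, pow_succ]
  have hk1 : (0:ℝ) < (k:ℝ)+1 := by positivity
  field_simp
  linear_combination (pp n m * pp n m ^ y * qq n m ^ (k-y)) * hcid

include hm1 hmn in
lemma ineqG {z : ℕ} (hz1 : 1 ≤ z) (hzk : z < k) :
    pp n m * ((k:ℝ)-z) * (∑ y ∈ range z, bb n m k y)
      ≤ qq n m * (z:ℝ) * (∑ y ∈ range (z+1), bb n m k y) := by
  have hp := pp_pos hm1 hmn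
  have hq := qq_pos hm1 hmn
  rw [Finset.mul_sum, Finset.mul_sum]
  calc ∑ y ∈ range z, pp n m * ((k:ℝ)-z) * bb n m k y
      ≤ ∑ y ∈ range z, pp n m * ((k:ℝ)-y) * bb n m k y := by
        apply Finset.sum_le_sum
        intro y hy
        rw [Finset.mem_range] at hy
        have hb := bb_nonneg hm1 hmn (k := k) y
        have hyz : (y:ℝ) ≤ z := by exact_mod_cast le_of_lt hy
        have h1 : (0:ℝ) ≤ pp n m * bb n m k y := mul_nonneg hp.le hb
        nlinarith
    _ = ∑ y ∈ range z, qq n m * ((y:ℝ)+1) * bb n m k (y+1) := by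
        refine Finset.sum_congr rfl fun y hy => ?_
        rw [Finset.mem_range] at hy
        exact bb_rec hm1 hmn (by omega)
    _ ≤ ∑ y ∈ range z, qq n m * (z:ℝ) * bb n m k (y+1) := by
        apply Finset.sum_le_sum
        intro y hy
        rw [Finset.mem_range] at hy
        have hb := bb_nonneg hm1 hmn (k := k) (y+1)
        have hyz : (y:ℝ)+1 ≤ z := by exact_mod_cast (by omega : y+1 ≤ z)
        have h1 : (0:ℝ) ≤ qq n m * bb n m k (y+1) := mul_nonneg hq.le hb
        nlinarith
    _ ≤ ∑ y ∈ range (z+1), qq n m * (z:ℝ) * bb n m k y := by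
        rw [Finset.sum_range_succ' (fun y => qq n m * (z:ℝ) * bb n m k y) z]
        have hb := bb_nonneg hm1 hmn (k := k) 0
        have : (0:ℝ) ≤ qq n m * (z:ℝ) * bb n m k 0 := by positivity
        push_cast
        linarith

include hm1 hmn in
lemma ineqE {z : ℕ} (hz1 : 1 ≤ z) (hzk : z < k) :
    qq n m * (z:ℝ) * (∑ y ∈ Finset.Ico (z+1) (k+1), bb n m k y)
      ≤ pp n m * ((k:ℝ)-z) * (∑ y ∈ Finset.Ico z (k+1), bb n m k y) := by
  have hp := pp_pos hm1 hmn
  have hq := qq_pos hm1 hmn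
  rw [Finset.mul_sum, Finset.mul_sum]
  calc ∑ y ∈ Finset.Ico (z+1) (k+1), qq n m * (z:ℝ) * bb n m k y
      ≤ ∑ y ∈ Finset.Ico (z+1) (k+1), qq n m * (y:ℝ) * bb n m k y := by
        apply Finset.sum_le_sum
        intro y hy
        rw [Finset.mem_Ico] at hy
        have hb := bb_nonneg hm1 hmn (k := k) y
        have hyz : (z:ℝ) ≤ y := by exact_mod_cast (by omega : z ≤ y)
        have h1 : (0:ℝ) ≤ qq n m * bb n m k y := mul_nonneg hq.le hb
        nlinarith
    _ = ∑ u ∈ Finset.Ico z k, pp n m * ((k:ℝ)-u) * bb n m k u := by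
        rw [Finset.sum_Ico_eq_sum_range, Finset.sum_Ico_eq_sum_range]
        have hlen : k + 1 - (z+1) = k - z := by omega
        rw [hlen]
        refine Finset.sum_congr rfl fun i hi => ?_
        rw [Finset.mem_range] at hi
        have hrec := bb_rec hm1 hmn (show z+i < k by omega)
        have hc1 : ((z+1+i : ℕ):ℝ) = ((z+i:ℕ):ℝ)+1 := by push_cast; ring
        rw [show z+1+i = (z+i)+1 by omega]
        push_cast at hrec ⊢
        linarith [hrec]
    _ ≤ ∑ u ∈ Finset.Ico z k, pp n m * ((k:ℝ)-z) * bb n m k u := by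
        apply Finset.sum_le_sum
        intro u hu
        rw [Finset.mem_Ico] at hu
        have hb := bb_nonneg hm1 hmn (k := k) u
        have hyz : (z:ℝ) ≤ u := by exact_mod_cast hu.1
        have h1 : (0:ℝ) ≤ pp n m * bb n m k u := mul_nonneg hp.le hb
        nlinarith
    _ ≤ ∑ u ∈ Finset.Ico z (k+1), pp n m * ((k:ℝ)-z) * bb n m k u := by
        rw [Finset.sum_Ico_succ_top (by omega : z ≤ k)]
        have hb := bb_nonneg hm1 hmn (k := k) k
        have hkz : (0:ℝ) ≤ (k:ℝ)-z := by
          have : (z:ℝ) ≤ k := by exact_mod_cast le_of_lt hzk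
          linarith
        have : (0:ℝ) ≤ pp n m * ((k:ℝ)-z) * bb n m k k := by positivity
        linarith

include hm1 hmn in
lemma ineqP {z : ℕ} (hz1 : 1 ≤ z) (hzk : z < k) :
    qq n m * (z:ℝ) * (∑ y ∈ Finset.Ico (z+1) (k+1), bb n m k y)
      + pp n m * ((k:ℝ)-z) * (∑ y ∈ range z, bb n m k y)
      ≤ (z:ℝ) * ((k:ℝ)-z) / ((k:ℝ)+1) := by
  have hp := pp_pos hm1 hmn
  have hq := qq_pos hm1 hmn
  have hzkR : (z:ℝ) < (k:ℝ) := by exact_mod_cast hzk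
  have hfac : (0:ℝ) ≤ (z:ℝ) * ((k:ℝ)-z) / ((k:ℝ)+1) := by
    apply div_nonneg
    · nlinarith
    · positivity
  have t1 : qq n m * (z:ℝ) * (∑ y ∈ Finset.Ico (z+1) (k+1), bb n m k y)
      ≤ ((z:ℝ) * ((k:ℝ)-z) / ((k:ℝ)+1)) * (∑ y ∈ Finset.Ico (z+1) (k+1), bb n m (k+1) y) := by
    rw [Finset.mul_sum, Finset.mul_sum]
    apply Finset.sum_le_sum
    intro y hy
    rw [Finset.mem_Ico] at hy
    have hyk : y ≤ k := by omega
    have hconv := qb_eq hm1 hmn (k := k) hyk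
    have hb' := bb_nonneg hm1 hmn (k := k+1) y
    calc qq n m * (z:ℝ) * bb n m k y = (z:ℝ) * (qq n m * bb n m k y) := by ring
      _ = (z:ℝ) * ((((k:ℝ)+1-y)/((k:ℝ)+1)) * bb n m (k+1) y) := by rw [hconv]
      _ ≤ (z:ℝ) * ((((k:ℝ)-z)/((k:ℝ)+1)) * bb n m (k+1) y) := by
          apply mul_le_mul_of_nonneg_left _ (by positivity)
          apply mul_le_mul_of_nonneg_right _ hb'
          apply (div_le_div_iff_of_pos_right (by positivity)).mpr
          have hzy : (z:ℝ)+1 ≤ (y:ℝ) := by exact_mod_cast hy.1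
          linarith
      _ = (z:ℝ) * ((k:ℝ)-z) / ((k:ℝ)+1) * bb n m (k+1) y := by ring
  have t2 : pp n m * ((k:ℝ)-z) * (∑ y ∈ range z, bb n m k y)
      ≤ ((z:ℝ) * ((k:ℝ)-z) / ((k:ℝ)+1)) * (∑ y ∈ range z, bb n m (k+1) (y+1)) := by
    rw [Finset.mul_sum, Finset.mul_sum]
    apply Finset.sum_le_sum
    intro y hy
    rw [Finset.mem_range] at hy
    have hyk : y ≤ k := by omega
    have hconv := pb_eq hm1 hmn (k := k) hyk
    have hb' := bb_nonneg hm1 hmn (k := k+1) (y+1)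
    have hy1z : (y:ℝ)+1 ≤ (z:ℝ) := by exact_mod_cast (by omega : y+1 ≤ z)
    calc pp n m * ((k:ℝ)-z) * bb n m k y = ((k:ℝ)-z) * (pp n m * bb n m k y) := by ring
      _ = ((k:ℝ)-z) * ((((y:ℝ)+1)/((k:ℝ)+1)) * bb n m (k+1) (y+1)) := by rw [hconv]
      _ ≤ ((k:ℝ)-z) * (((z:ℝ)/((k:ℝ)+1)) * bb n m (k+1) (y+1)) := by
          apply mul_le_mul_of_nonneg_left _ (by linarith)
          apply mul_le_mul_of_nonneg_right _ hb'
          apply div_le_div_of_nonneg_right hy1z (by positivity)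
      _ = (z:ℝ) * ((k:ℝ)-z) / ((k:ℝ)+1) * bb n m (k+1) (y+1) := by ring
  have t3 : (∑ y ∈ Finset.Ico (z+1) (k+1), bb n m (k+1) y)
      + (∑ y ∈ range z, bb n m (k+1) (y+1)) ≤ 1 := by
    have e1 : ∑ y ∈ range z, bb n m (k+1) (y+1) = ∑ y ∈ Finset.Ico 1 (z+1), bb n m (k+1) y := by
      rw [Finset.sum_Ico_eq_sum_range]
      have : z + 1 - 1 = z := by omega
      rw [this]
      refine Finset.sum_congr rfl fun i hi => ?_
      rw [show 1 + i = i + 1 by omega]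
    have e2 := Finset.sum_Ico_consecutive (bb n m (k+1)) (by omega : 1 ≤ z+1) (by omega : z+1 ≤ k+1)
    have e3 : ∑ y ∈ Finset.Ico 1 (k+1), bb n m (k+1) y ≤ ∑ y ∈ range (k+2), bb n m (k+1) y := by
      apply Finset.sum_le_sum_of_subset_of_nonneg
      · intro y hy
        rw [Finset.mem_Ico] at hy
        rw [Finset.mem_range]
        omega
      · intro y _ _
        exact bb_nonneg hm1 hmn (k := k+1) y
    rw [e1]
    rw [sum_bb (n := n) (m := m) (k := k+1)] at e3
    linarith
  have hS1 : (0:ℝ) ≤ ∑ y ∈ Finset.Ico (z+1) (k+1), bb n m (k+1) y :=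
    Finset.sum_nonneg fun y _ => bb_nonneg hm1 hmn (k := k+1) y
  have hS2 : (0:ℝ) ≤ ∑ y ∈ range z, bb n m (k+1) (y+1) :=
    Finset.sum_nonneg fun y _ => bb_nonneg hm1 hmn (k := k+1) (y+1)
  calc qq n m * (z:ℝ) * (∑ y ∈ Finset.Ico (z+1) (k+1), bb n m k y)
      + pp n m * ((k:ℝ)-z) * (∑ y ∈ range z, bb n m k y)
      ≤ ((z:ℝ) * ((k:ℝ)-z) / ((k:ℝ)+1)) *
          ((∑ y ∈ Finset.Ico (z+1) (k+1), bb n m (k+1) y) + (∑ y ∈ range z, bb n m (k+1) (y+1))) := by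
        rw [mul_add]
        exact add_le_add t1 t2
    _ ≤ ((z:ℝ) * ((k:ℝ)-z) / ((k:ℝ)+1)) * 1 := by
        exact mul_le_mul_of_nonneg_left t3 hfac
    _ = (z:ℝ) * ((k:ℝ)-z) / ((k:ℝ)+1) := by ring

end Bin

section Stein
variable {n m k : ℕ}
variable (hm1 : 1 ≤ m) (hmn : m < n) (hkn : k ≤ n)

include hm1 hmn hkn in
lemma NN_k : NN n m k k = 0 := by
  unfold NN gg
  have e1 : ∑ y ∈ range (k+1), bb n m k y * ((if bb n m k y < hh n m k y then (1:ℝ) else 0) - bA n m k)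
      = (∑ y ∈ range (k+1), bb n m k y * (if bb n m k y < hh n m k y then (1:ℝ) else 0))
        - bA n m k * ∑ y ∈ range (k+1), bb n m k y := by
    rw [Finset.mul_sum, ← Finset.sum_sub_distrib]
    exact Finset.sum_congr rfl fun y hy => by ring
  rw [e1, sum_bb]
  have e2 : ∑ y ∈ range (k+1), bb n m k y * (if bb n m k y < hh n m k y then (1:ℝ) else 0)
      = bA n m k := by
    unfold bA AA
    rw [Finset.sum_filter]
    refine Finset.sum_congr rfl fun y hy => ?_
    by_cases hc : bb n m k y < hh n m k y
    · rw [if_pos hc, if_pos hc, mul_one]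
    · rw [if_neg hc, if_neg hc, mul_zero]
  rw [e2]; ring

include hm1 hmn in
lemma eqA {x : ℕ} (hx : x < k) :
    pp n m * ((k:ℝ)-x) * ff n m k (x+1) = NN n m k x / bb n m k x := by
  unfold ff
  rw [show (x+1) - 1 = x by omega]
  have hbp := bb_pos hm1 hmn (le_of_lt hx)
  have hkx : (0:ℝ) < (k:ℝ) - x := by
    have : (x:ℝ) < k := by exact_mod_cast hx
    linarith
  have hp := pp_pos hm1 hmn
  have h1 : pp n m ≠ 0 := ne_of_gt hp
  have h2 : (k:ℝ) - x ≠ 0 := ne_of_gt hkx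
  have h3 : bb n m k x ≠ 0 := ne_of_gt hbp
  field_simp

include hm1 hmn in
lemma denom_eq {z : ℕ} (hz1 : 1 ≤ z) (hzk : z ≤ k) :
    pp n m * ((k:ℝ)-((z-1:ℕ):ℝ)) * bb n m k (z-1) = qq n m * (z:ℝ) * bb n m k z := by
  have hrec := bb_rec hm1 hmn (show z-1 < k by omega)
  rw [show (z-1)+1 = z by omega] at hrec
  have hcx : ((z-1:ℕ):ℝ) = (z:ℝ)-1 := by
    push_cast [Nat.cast_sub hz1]; ring
  rw [hcx] at hrec ⊢
  rw [hrec]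
  ring

include hm1 hmn in
lemma eqB {x : ℕ} (hx0 : 1 ≤ x) (hxk : x ≤ k) :
    qq n m * (x:ℝ) * ff n m k x = NN n m k (x-1) / bb n m k x := by
  unfold ff
  rw [denom_eq hm1 hmn hx0 hxk]
  have hbp := bb_pos hm1 hmn hxk
  have hq := qq_pos hm1 hmn
  have hxR : (0:ℝ) < (x:ℝ) := by exact_mod_cast hx0
  have h1 : qq n m ≠ 0 := ne_of_gt hq
  have h2 : (x:ℝ) ≠ 0 := ne_of_gt hxR
  have h3 : bb n m k x ≠ 0 := ne_of_gt hbp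
  field_simp

include hm1 hmn hkn in
lemma NN_succ {x : ℕ} (hx0 : 1 ≤ x) :
    NN n m k x = NN n m k (x-1) + bb n m k x * gg n m k x := by
  obtain ⟨u, rfl⟩ : ∃ u, x = u+1 := ⟨x-1, by omega⟩
  rw [Nat.add_sub_cancel]
  rw [show NN n m k (u+1) = ∑ y ∈ range (u+1+1), bb n m k y * gg n m k y from rfl,
    Finset.sum_range_succ]
  rfl

include hm1 hmn hkn in
lemma stein_eq (hk1 : 1 ≤ k) {x : ℕ} (hxk : x ≤ k) :
    pp n m * ((k:ℝ)-x) * ff n m k (x+1) - qq n m * (x:ℝ) * ff n m k x = gg n m k x := by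
  rcases Nat.eq_zero_or_pos x with rfl | hx0
  · have hb0 := bb_pos hm1 hmn (Nat.zero_le k)
    have hN0 : NN n m k 0 = bb n m k 0 * gg n m k 0 := by
      rw [show NN n m k 0 = ∑ y ∈ range 1, bb n m k y * gg n m k y from rfl,
        Finset.sum_range_one]
    have hA := eqA hm1 hmn (show 0 < k by omega)
    rw [hN0, mul_comm (bb n m k 0), mul_div_assoc, div_self (ne_of_gt hb0), mul_one] at hA
    rw [hA]
    simp
  rcases Nat.lt_or_ge x k with hxk' | hxk'
  · rw [eqA hm1 hmn hxk', eqB hm1 hmn hx0 (le_of_lt hxk'), div_sub_div_same,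
      NN_succ hm1 hmn hkn hx0]
    have hbp := bb_pos hm1 hmn (le_of_lt hxk')
    rw [add_sub_cancel_left, mul_comm (bb n m k x), mul_div_assoc,
      div_self (ne_of_gt hbp), mul_one]
  · have hxe : x = k := by omega
    rw [hxe]
    rw [eqB hm1 hmn (by omega : 1 ≤ k) le_rfl]
    have hNk := NN_k hm1 hmn hkn
    have hNs := NN_succ hm1 hmn hkn (show 1 ≤ k by omega)
    rw [hNk] at hNs
    have hbp := bb_pos hm1 hmn (le_refl k)
    have hNN1 : NN n m k (k-1) = - (bb n m k k * gg n m k k) := by linarith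
    rw [hNN1]
    field_simp
    ring

include hm1 hmn hkn in
lemma main_sum (hk1 : 1 ≤ k) :
    ∑ x ∈ range (k+1), gg n m k x * hh n m k x
      = ∑ x ∈ range k, ff n m k (x+1) * cc n m k x := by
  have hpt : ∀ x ∈ range (k+1), gg n m k x * hh n m k x
      = (pp n m * ((k:ℝ)-x) * ff n m k (x+1)) * hh n m k x
        - (qq n m * (x:ℝ) * ff n m k x) * hh n m k x := by
    intro x hx
    rw [Finset.mem_range] at hx
    rw [← stein_eq hm1 hmn hkn hk1 (by omega : x ≤ k)]
    ring
  rw [Finset.sum_congr rfl hpt, Finset.sum_sub_distrib]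
  have e1 : ∑ x ∈ range (k+1), (pp n m * ((k:ℝ)-x) * ff n m k (x+1)) * hh n m k x
      = ∑ x ∈ range k, (pp n m * ((k:ℝ)-x) * ff n m k (x+1)) * hh n m k x := by
    rw [Finset.sum_range_succ]
    simp
  have e2 : ∑ x ∈ range (k+1), (qq n m * (x:ℝ) * ff n m k x) * hh n m k x
      = ∑ x ∈ range k, (qq n m * ((x:ℝ)+1) * ff n m k (x+1)) * hh n m k (x+1) := by
    rw [Finset.sum_range_succ' (fun x => (qq n m * (x:ℝ) * ff n m k x) * hh n m k x) k]
    push_cast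
    simp
  rw [e1, e2, ← Finset.sum_sub_distrib]
  refine Finset.sum_congr rfl fun x hx => ?_
  unfold cc
  ring

include hm1 hmn hkn in
lemma tv_eq :
    (1/2) * ∑ x ∈ range (k+1), |hh n m k x - bb n m k x|
      = ∑ x ∈ range (k+1), gg n m k x * hh n m k x := by
  have hpt : ∀ x ∈ range (k+1), |hh n m k x - bb n m k x|
      = 2*(if bb n m k x < hh n m k x then hh n m k x - bb n m k x else 0)
        - (hh n m k x - bb n m k x) := by
    intro x hx
    by_cases hc : bb n m k x < hh n m k x
    · rw [if_pos hc, abs_of_pos (by linarith)]; ring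
    · have hc' : hh n m k x ≤ bb n m k x := not_lt.mp hc
      rw [if_neg hc, abs_of_nonpos (by linarith)]; ring
  have e0 : ∑ x ∈ range (k+1), (hh n m k x - bb n m k x) = 0 := by
    rw [Finset.sum_sub_distrib, sum_hh hmn hkn, sum_bb]; ring
  rw [Finset.sum_congr rfl hpt, Finset.sum_sub_distrib, e0, sub_zero, ← Finset.mul_sum]
  have eR : ∑ x ∈ range (k+1), gg n m k x * hh n m k x
      = (∑ x ∈ range (k+1), (if bb n m k x < hh n m k x then hh n m k x else 0))
        - bA n m k := by
    unfold gg
    have hpt2 : ∀ x ∈ range (k+1),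
        ((if bb n m k x < hh n m k x then (1:ℝ) else 0) - bA n m k) * hh n m k x
        = (if bb n m k x < hh n m k x then hh n m k x else 0) - bA n m k * hh n m k x := by
      intro x hx
      by_cases hc : bb n m k x < hh n m k x
      · rw [if_pos hc, if_pos hc]; ring
      · rw [if_neg hc, if_neg hc]; ring
    rw [Finset.sum_congr rfl hpt2, Finset.sum_sub_distrib, ← Finset.mul_sum,
      sum_hh hmn hkn, mul_one]
  have ebA : bA n m k = ∑ x ∈ range (k+1), (if bb n m k x < hh n m k x then bb n m k x else 0) := by
    unfold bA AA
    rw [Finset.sum_filter]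
  have efin : ∀ x ∈ range (k+1),
      (if bb n m k x < hh n m k x then hh n m k x - bb n m k x else 0)
      = (if bb n m k x < hh n m k x then hh n m k x else 0)
        - (if bb n m k x < hh n m k x then bb n m k x else 0) := by
    intro x hx
    by_cases hc : bb n m k x < hh n m k x
    · rw [if_pos hc, if_pos hc, if_pos hc]
    · rw [if_neg hc, if_neg hc, if_neg hc]; ring
  rw [eR, ebA, Finset.sum_congr rfl efin, Finset.sum_sub_distrib]
  ring

end Stein
end Main

lemma sum_extend (f : ℕ → ℝ) {a b : ℕ} (hab : a ≤ b) :
    ∑ j ∈ Finset.range a, f j = ∑ j ∈ Finset.range b, (if j < a then f j else 0) := by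
  rw [← Finset.sum_filter]
  congr 1
  ext j
  simp only [Finset.mem_filter, Finset.mem_range]
  omega

lemma sum_partial (c : ℕ → ℝ) (K : ℕ) :
    ∑ x ∈ Finset.range K, (∑ y ∈ Finset.range (x+1), c y)
      = ∑ y ∈ Finset.range K, ((K:ℝ) - (y:ℝ)) * c y := by
  induction K with
  | zero => simp
  | succ K ih =>
    rw [Finset.sum_range_succ, ih]
    have h1 : ∀ y ∈ Finset.range (K+1), (((K:ℝ)+1) - y) * c y = ((K:ℝ)-y)*c y + c y := by
      intro y hy; ring
    have h2 : ∀ y ∈ Finset.range (K+1), (((K+1:ℕ):ℝ) - y) * c y = (((K:ℝ)+1) - y) * c y := by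
      intro y hy; push_cast; ring
    rw [Finset.sum_congr rfl h2, Finset.sum_congr rfl h1, Finset.sum_add_distrib]
    rw [Finset.sum_range_succ (fun y => ((K:ℝ)-y)*c y) K]
    simp

lemma abel_sum (c φ : ℕ → ℝ) (K : ℕ) :
    ∑ x ∈ Finset.range K, φ x * c x
      = (∑ x ∈ Finset.range K, (∑ y ∈ Finset.range (x+1), c y) * (φ x - φ (x+1)))
        + (∑ y ∈ Finset.range K, c y) * φ K := by
  induction K with
  | zero => simp
  | succ K ih =>
    rw [Finset.sum_range_succ, ih]
    rw [Finset.sum_range_succ (fun x => (∑ y ∈ Finset.range (x+1), c y) * (φ x - φ (x+1))) K]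
    rw [Finset.sum_range_succ c K]
    ring

lemma sum_extend' (f : ℕ → ℝ) {a b : ℕ} (hab : a ≤ b) :
    ∑ j ∈ Finset.range a, f j = ∑ j ∈ Finset.range b, (if j < a then f j else 0) := by
  rw [← Finset.sum_filter]
  congr 1
  ext j
  simp only [Finset.mem_filter, Finset.mem_range]
  omega

section DF
open Finset
variable {n m k : ℕ}
variable (hm1 : 1 ≤ m) (hmn : m < n) (hkn : k ≤ n)

include hm1 hmn hkn in
set_option maxHeartbeats 1000000 in
lemma df_bound {z : ℕ} (hz1 : 1 ≤ z) (hzk : z < k) :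
    |ff n m k (z+1) - ff n m k z| ≤ 1/(((k:ℝ)+1) * pp n m * qq n m) := by
  have hp := pp_pos hm1 hmn
  have hq := qq_pos hm1 hmn
  have hbz := bb_pos hm1 hmn (le_of_lt hzk)
  have hzR : (0:ℝ) < (z:ℝ) := by exact_mod_cast hz1
  have hzkR : (z:ℝ) < (k:ℝ) := by exact_mod_cast hzk
  have hkzR : (0:ℝ) < (k:ℝ)-(z:ℝ) := by linarith
  set F0 := ∑ y ∈ range z, bb n m k y with hF0
  set Fz := ∑ y ∈ range (z+1), bb n m k y with hFz
  set L1 := ∑ y ∈ Finset.Ico (z+1) (k+1), bb n m k y with hL1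
  have hsplit : Fz + L1 = 1 := by
    rw [hFz, hL1, Finset.range_eq_Ico,
      Finset.sum_Ico_consecutive _ (Nat.zero_le _) (by omega : z+1 ≤ k+1)]
    rw [← Finset.range_eq_Ico]
    exact sum_bb
  have hsplit0 : F0 + (∑ y ∈ Finset.Ico z (k+1), bb n m k y) = 1 := by
    rw [hF0, Finset.range_eq_Ico,
      Finset.sum_Ico_consecutive _ (Nat.zero_le _) (by omega : z ≤ k+1)]
    rw [← Finset.range_eq_Ico]
    exact sum_bb
  have hF0nn : 0 ≤ F0 := Finset.sum_nonneg fun y _ => bb_nonneg hm1 hmn (k := k) y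
  have hL1nn : 0 ≤ L1 := Finset.sum_nonneg fun y _ => bb_nonneg hm1 hmn (k := k) y
  set R := qq n m * (z:ℝ) * Fz - pp n m * ((k:ℝ)-z) * F0 with hR
  set Pz := qq n m * (z:ℝ) * L1 + pp n m * ((k:ℝ)-z) * F0 with hPz
  have hPznn : 0 ≤ Pz := by
    rw [hPz]
    have h1 : (0:ℝ) ≤ qq n m * (z:ℝ) * L1 := by positivity
    have h2 : (0:ℝ) ≤ pp n m * ((k:ℝ)-z) * F0 := by positivity
    linarith
  have hRnn : 0 ≤ R := by
    have := ineqG hm1 hmn (k := k) hz1 hzk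
    rw [hR]
    rw [← hF0, ← hFz] at this
    linarith
  set Num := qq n m * (z:ℝ) * NN n m k z - pp n m * ((k:ℝ)-z) * NN n m k (z-1) with hNum
  -- claim 1 : the difference equals Num / D
  have hffz1 : ff n m k (z+1) = NN n m k z / (pp n m * ((k:ℝ)-z) * bb n m k z) := by
    unfold ff
    rw [show (z+1) - 1 = z by omega]
  have hffz : ff n m k z = NN n m k (z-1) / (qq n m * (z:ℝ) * bb n m k z) := by
    unfold ff
    rw [denom_eq hm1 hmn hz1 (le_of_lt hzk)]
  have hdelta : ff n m k (z+1) - ff n m k z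
      = Num / (pp n m * ((k:ℝ)-z) * (qq n m * (z:ℝ)) * bb n m k z) := by
    rw [hffz1, hffz, hNum]
    field_simp
  -- claim 2 : |Num| ≤ bb z * Pz
  have hzk1 : z < k + 1 := by omega
  have hzk1' : z + 1 ≤ k + 1 := by omega
  have hNz : NN n m k z
      = (∑ j ∈ range (k+1), (if j < z+1 then bb n m k j * gg n m k j else 0)) := by
    rw [show NN n m k z = ∑ y ∈ range (z+1), bb n m k y * gg n m k y from rfl]
    exact sum_extend' _ hzk1'
  have hNz1 : NN n m k (z-1)
      = (∑ j ∈ range (k+1), (if j < z then bb n m k j * gg n m k j else 0)) := by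
    rw [show NN n m k (z-1) = ∑ y ∈ range ((z-1)+1), bb n m k y * gg n m k y from rfl,
      show (z-1)+1 = z by omega]
    exact sum_extend' _ (by omega)
  -- w function
  set w : ℕ → ℝ := fun j =>
    (if j < z+1 then qq n m * (z:ℝ) else 0) - (if j < z then pp n m * ((k:ℝ)-z) else 0) - R
    with hw
  set χ : ℕ → ℝ := fun j => if bb n m k j < hh n m k j then (1:ℝ) else 0 with hχ
  have hgg : ∀ j, gg n m k j = χ j - bA n m k := fun j => rfl
  have hbA : bA n m k = ∑ j ∈ range (k+1), χ j * bb n m k j := by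
    unfold bA AA
    rw [Finset.sum_filter]
    refine Finset.sum_congr rfl fun j hj => ?_
    by_cases hc : bb n m k j < hh n m k j
    · rw [if_pos hc, hχ]; simp [hc]
    · rw [if_neg hc, hχ]; simp [hc]
  have hFzext : Fz = ∑ j ∈ range (k+1), (if j < z+1 then bb n m k j else 0) := by
    rw [hFz]; exact sum_extend' _ hzk1'
  have hF0ext : F0 = ∑ j ∈ range (k+1), (if j < z then bb n m k j else 0) := by
    rw [hF0]; exact sum_extend' _ (by omega)
  -- Num as a single sum
  have hNum2 : Num = ∑ j ∈ range (k+1), χ j * bb n m k j * w j := by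
    have expand : ∀ j ∈ range (k+1), χ j * bb n m k j * w j
        = qq n m * (z:ℝ) * ((if j < z+1 then bb n m k j * gg n m k j else 0)
              + bA n m k * (if j < z+1 then bb n m k j else 0))
          - pp n m * ((k:ℝ)-z) * ((if j < z then bb n m k j * gg n m k j else 0)
              + bA n m k * (if j < z then bb n m k j else 0))
          - R * (χ j * bb n m k j) := by
      intro j _
      rw [hgg j, hw]
      by_cases h1 : j < z+1 <;> by_cases h2 : j < z <;>
        simp only [h1, h2, if_true, if_false, if_pos, if_neg, not_false_iff] <;> ring
    rw [Finset.sum_congr rfl expand]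
    rw [Finset.sum_sub_distrib, Finset.sum_sub_distrib, ← Finset.mul_sum, ← Finset.mul_sum,
      ← Finset.mul_sum, Finset.sum_add_distrib, Finset.sum_add_distrib,
      ← Finset.mul_sum, ← Finset.mul_sum]
    rw [← hNz, ← hNz1, ← hFzext, ← hF0ext, ← hbA, hNum, hR]
    ring
  -- pointwise sign facts
  have hwz : w z = Pz := by
    rw [hw]
    simp only [lt_irrefl, Nat.lt_succ_self, if_true, if_false, if_neg (lt_irrefl z)]
    rw [hR, hPz]
    have : Fz = 1 - L1 := by linarith
    rw [this]
    ring
  have hwneg : ∀ j, j ≠ z → w j ≤ 0 := by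
    intro j hj
    have hwj : w j = ((if j < z+1 then qq n m * (z:ℝ) else 0)
        - (if j < z then pp n m * ((k:ℝ)-z) else 0)) - R := rfl
    rw [hwj]
    by_cases h2 : j < z
    · -- j < z
      rw [if_pos (by omega : j < z+1), if_pos h2]
      have hE := ineqE hm1 hmn (k := k) hz1 hzk
      rw [← hL1] at hE
      have h1mF0 : (∑ y ∈ Finset.Ico z (k+1), bb n m k y) = 1 - F0 := by linarith
      rw [h1mF0] at hE
      rw [hR]
      have hFz1 : Fz ≤ 1 := by
        have : 0 ≤ L1 := hL1nn
        linarith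
      nlinarith [hE]
    · by_cases h1 : j < z+1
      · omega
      · rw [if_neg h1, if_neg h2]
        linarith [hRnn]
  have hχnn : ∀ j, 0 ≤ χ j := by
    intro j; rw [hχ]; by_cases hc : bb n m k j < hh n m k j <;> simp [hc]
  have hχle : ∀ j, χ j ≤ 1 := by
    intro j; rw [hχ]; by_cases hc : bb n m k j < hh n m k j <;> simp [hc]
  have hbnn : ∀ j, 0 ≤ bb n m k j := fun j => bb_nonneg hm1 hmn (k := k) j
  -- upper bound
  have hub : Num ≤ bb n m k z * Pz := by
    rw [hNum2]
    calc ∑ j ∈ range (k+1), χ j * bb n m k j * w j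
        ≤ ∑ j ∈ range (k+1), (if j = z then bb n m k z * Pz else 0) := by
          apply Finset.sum_le_sum
          intro j hj
          by_cases hc : j = z
          · subst hc
            rw [if_pos rfl, hwz]
            have hmono := mul_le_mul_of_nonneg_right (hχle j) (mul_nonneg (hbnn j) hPznn)
            nlinarith [hmono]
          · rw [if_neg hc]
            have hw0 := hwneg j hc
            have h1 : 0 ≤ χ j * bb n m k j := mul_nonneg (hχnn j) (hbnn j)
            exact mul_nonpos_of_nonneg_of_nonpos h1 hw0
      _ = bb n m k z * Pz := by
          rw [Finset.sum_ite_eq' (range (k+1)) z (fun _ => bb n m k z * Pz)]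
          rw [if_pos (Finset.mem_range.mpr hzk1)]
  -- total-zero fact
  have hzero : ∑ j ∈ range (k+1), bb n m k j * w j = 0 := by
    have expand2 : ∀ j ∈ range (k+1), bb n m k j * w j
        = qq n m * (z:ℝ) * (if j < z+1 then bb n m k j else 0)
          - pp n m * ((k:ℝ)-z) * (if j < z then bb n m k j else 0)
          - R * bb n m k j := by
      intro j _
      rw [hw]
      by_cases h1 : j < z+1 <;> by_cases h2 : j < z <;>
        simp only [h1, h2, if_true, if_false, if_pos, if_neg, not_false_iff] <;> first | ring | omega
    rw [Finset.sum_congr rfl expand2, Finset.sum_sub_distrib, Finset.sum_sub_distrib,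
      ← Finset.mul_sum, ← Finset.mul_sum, ← Finset.mul_sum, ← hFzext, ← hF0ext, sum_bb, hR]
    ring
  -- lower bound
  have hlb : - (bb n m k z * Pz) ≤ Num := by
    rw [hNum2]
    have step : ∀ j ∈ range (k+1),
        bb n m k j * w j - (if j = z then bb n m k z * Pz else 0) ≤ χ j * bb n m k j * w j := by
      intro j hj
      by_cases hc : j = z
      · subst hc
        rw [if_pos rfl, hwz]
        have hmono := mul_nonneg (mul_nonneg (hχnn j) (hbnn j)) hPznn
        nlinarith [hmono]
      · rw [if_neg hc, sub_zero]
        have hw0 := hwneg j hc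
        have h1 : (1 - χ j) * (bb n m k j * w j) ≤ 0 := by
          apply mul_nonpos_of_nonneg_of_nonpos
          · linarith [hχle j]
          · exact mul_nonpos_of_nonneg_of_nonpos (hbnn j) hw0
        nlinarith
    have hsum := Finset.sum_le_sum step
    rw [Finset.sum_sub_distrib, hzero, Finset.sum_ite_eq' (range (k+1)) z
      (fun _ => bb n m k z * Pz), if_pos (Finset.mem_range.mpr hzk1)] at hsum
    linarith
  have hNumabs : |Num| ≤ bb n m k z * Pz := abs_le.mpr ⟨by linarith, hub⟩
  -- claim 3
  have hPzle := ineqP hm1 hmn (k := k) hz1 hzk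
  rw [← hL1, ← hF0, ← hPz] at hPzle
  -- finish
  have hDpos : (0:ℝ) < pp n m * ((k:ℝ)-z) * (qq n m * (z:ℝ)) * bb n m k z := by positivity
  have hBpos : (0:ℝ) < ((k:ℝ)+1) * pp n m * qq n m := by positivity
  rw [hdelta, abs_div, abs_of_pos hDpos, div_le_div_iff₀ hDpos hBpos]
  have hk1pos : (0:ℝ) < (k:ℝ)+1 := by positivity
  have h2 : Pz * ((k:ℝ)+1) ≤ (z:ℝ)*((k:ℝ)-z) := by
    rw [← le_div_iff₀ hk1pos]
    exact hPzle
  have h3 : |Num| * (((k:ℝ)+1) * pp n m * qq n m)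
      ≤ (bb n m k z * Pz) * (((k:ℝ)+1) * pp n m * qq n m) :=
    mul_le_mul_of_nonneg_right hNumabs (le_of_lt hBpos)
  have h4 : (bb n m k z * Pz) * (((k:ℝ)+1) * pp n m * qq n m)
      ≤ (bb n m k z * ((z:ℝ)*((k:ℝ)-z))) * (pp n m * qq n m) := by
    have := mul_le_mul_of_nonneg_right h2
      (show (0:ℝ) ≤ bb n m k z * (pp n m * qq n m) by positivity)
    nlinarith [this]
  calc |Num| * (((k:ℝ)+1) * pp n m * qq n m)
      ≤ (bb n m k z * ((z:ℝ)*((k:ℝ)-z))) * (pp n m * qq n m) := le_trans h3 h4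
    _ = 1 * (pp n m * ((k:ℝ)-↑z) * (qq n m * (z:ℝ)) * bb n m k z) := by ring
end DF

section Final
open Finset
variable {n m k : ℕ}

lemma main_bound (hm1 : 1 ≤ m) (hmn : m < n) (hk1 : 1 ≤ k) (hkn : k ≤ n) :
    (1/2) * ∑ x ∈ range (k+1), |hh n m k x - bb n m k x| ≤ (k:ℝ)/n := by
  have hp := pp_pos hm1 hmn
  have hq := qq_pos hm1 hmn
  have hn1 : (1:ℝ) < (n:ℝ) := by exact_mod_cast (by omega : 1 < n)
  have hkR : (k:ℝ) ≤ n := by exact_mod_cast hkn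
  have hk1R : (1:ℝ) ≤ (k:ℝ) := by exact_mod_cast hk1
  set B := 1/(((k:ℝ)+1) * pp n m * qq n m) with hB
  have hBnn : 0 ≤ B := by rw [hB]; positivity
  rw [tv_eq hm1 hmn hkn, main_sum hm1 hmn hkn hk1]
  have habel := abel_sum (cc n m k) (fun x => ff n m k (x+1)) k
  rw [sum_cc hmn hkn hm1 hk1, zero_mul, add_zero] at habel
  have e0 : ∑ x ∈ range k, (∑ y ∈ range (x+1), cc n m k y)
        * ((fun x => ff n m k (x+1)) x - (fun x => ff n m k (x+1)) (x+1))
      = ∑ x ∈ range k, CC n m k x * (ff n m k (x+1) - ff n m k (x+2)) := rfl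
  rw [e0] at habel
  rw [show (∑ x ∈ range k, ff n m k (x+1) * cc n m k x)
      = ∑ x ∈ range k, (fun x => ff n m k (x+1)) x * cc n m k x from rfl, habel]
  have e1 : ∑ x ∈ range k, CC n m k x * (ff n m k (x+1) - ff n m k (x+2))
      = ∑ x ∈ range (k-1), CC n m k x * (ff n m k (x+1) - ff n m k (x+2)) := by
    have hr : range k = range ((k-1)+1) := by congr 1; omega
    rw [hr, Finset.sum_range_succ, CC_last hmn hkn hm1 hk1, zero_mul, add_zero]
  rw [e1]
  have hbound : ∑ x ∈ range (k-1), CC n m k x * (ff n m k (x+1) - ff n m k (x+2))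
      ≤ ∑ x ∈ range (k-1), (-(CC n m k x)) * B := by
    apply Finset.sum_le_sum
    intro x hx
    rw [Finset.mem_range] at hx
    have hxk : x < k := by omega
    have hCC := CC_nonpos hmn hkn hm1 hk1 hxk
    have hdf := df_bound hm1 hmn hkn (show 1 ≤ x+1 by omega) (show x+1 < k by omega)
    have habs : |ff n m k (x+1) - ff n m k (x+2)| ≤ B := by
      rw [abs_sub_comm]
      exact hdf
    calc CC n m k x * (ff n m k (x+1) - ff n m k (x+2))
        ≤ |CC n m k x * (ff n m k (x+1) - ff n m k (x+2))| := le_abs_self _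
      _ = (-(CC n m k x)) * |ff n m k (x+1) - ff n m k (x+2)| := by
          rw [abs_mul, abs_of_nonpos hCC]
      _ ≤ (-(CC n m k x)) * B := mul_le_mul_of_nonneg_left habs (by linarith)
  have hS : ∑ x ∈ range (k-1), (-(CC n m k x))
      = (k:ℝ)*((k:ℝ)-1) * pp n m * qq n m / ((n:ℝ)-1) := by
    have h1 := sum_partial (cc n m k) k
    have h3 : ∑ y ∈ range k, ((k:ℝ)-(y:ℝ)) * cc n m k y
        = (k:ℝ) * (∑ y ∈ range k, cc n m k y) - ∑ y ∈ range k, (y:ℝ) * cc n m k y := by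
      rw [Finset.mul_sum, ← Finset.sum_sub_distrib]
      exact Finset.sum_congr rfl fun y hy => by ring
    rw [h3, sum_cc hmn hkn hm1 hk1, mul_zero, zero_sub, sum_xcc hmn hkn hm1 hk1] at h1
    have h2 : ∑ x ∈ range k, (∑ y ∈ range (x+1), cc n m k y)
        = ∑ x ∈ range (k-1), CC n m k x + CC n m k (k-1) := by
      have hr : range k = range ((k-1)+1) := by congr 1; omega
      rw [show (∑ x ∈ range k, (∑ y ∈ range (x+1), cc n m k y))
          = ∑ x ∈ range k, CC n m k x from rfl, hr, Finset.sum_range_succ]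
    rw [h2, CC_last hmn hkn hm1 hk1, add_zero] at h1
    rw [Finset.sum_neg_distrib]
    linarith
  have hsum2 : ∑ x ∈ range (k-1), (-(CC n m k x)) * B
      = B * ((k:ℝ)*((k:ℝ)-1) * pp n m * qq n m / ((n:ℝ)-1)) := by
    rw [← Finset.sum_mul, hS]
    ring
  have heq : B * ((k:ℝ)*((k:ℝ)-1) * pp n m * qq n m / ((n:ℝ)-1))
      = (k:ℝ)*((k:ℝ)-1) / (((k:ℝ)+1) * ((n:ℝ)-1)) := by
    rw [hB]
    have h1 : pp n m ≠ 0 := ne_of_gt hp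
    have h2 : qq n m ≠ 0 := ne_of_gt hq
    have h3 : ((k:ℝ)+1) ≠ 0 := by positivity
    have h4 : ((n:ℝ)-1) ≠ 0 := by intro hz; linarith
    field_simp
  have hfinal : (k:ℝ)*((k:ℝ)-1) / (((k:ℝ)+1) * ((n:ℝ)-1)) ≤ (k:ℝ)/n := by
    have hd1 : (0:ℝ) < ((k:ℝ)+1) * ((n:ℝ)-1) := by
      apply mul_pos (by positivity)
      linarith
    rw [div_le_div_iff₀ hd1 (by linarith : (0:ℝ) < (n:ℝ))]
    nlinarith [mul_nonneg (by linarith : (0:ℝ) ≤ (k:ℝ))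
      (by linarith : (0:ℝ) ≤ 2*(n:ℝ) - (k:ℝ) - 1)]
  linarith [hbound]

end Final

end TV14

/-- TV distance between the hypergeometric distribution `H(n,m,k)`
and the binomial distribution `B(k, m/n)` is at most `k/n`. -/
theorem tv_hypergeometric_binomial_le (n m k : ℕ) (hn : 0 < n) (hm : m ≤ n) (hk : k ≤ n) :
    (1 / 2) * ∑ i ∈ Finset.range (k + 1),
        |hypPMF n m k i - binPMF k ((m : ℝ) / n) i| ≤ (k : ℝ) / n := by
  have hnR : (0:ℝ) < (n:ℝ) := by exact_mod_cast hn
  rcases Nat.eq_zero_or_pos k with rfl | hk1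
  · rw [Finset.sum_range_one]
    have h1 : hypPMF n m 0 0 = 1 := by
      unfold hypPMF
      simp
    have h2 : binPMF 0 ((m:ℝ)/n) 0 = 1 := by
      unfold binPMF; simp
    rw [h1, h2]
    simp
  rcases Nat.eq_zero_or_pos m with rfl | hm1
  · have hz : ∀ i ∈ Finset.range (k+1), |hypPMF n 0 k i - binPMF k (((0:ℕ):ℝ)/n) i| = 0 := by
      intro i hi
      rw [Finset.mem_range] at hi
      have hcn : (0:ℝ) < (n.choose k : ℝ) := by exact_mod_cast Nat.choose_pos hk
      rcases Nat.eq_zero_or_pos i with rfl | hi1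
      · have h1 : hypPMF n 0 k 0 = 1 := by
          unfold hypPMF
          simp only [Nat.choose_zero_right, Nat.sub_zero, Nat.cast_one, one_mul]
          rw [div_self (ne_of_gt hcn)]
        have h2 : binPMF k (((0:ℕ):ℝ)/n) 0 = 1 := by
          unfold binPMF; norm_num
        rw [h1, h2]; simp
      · have h1 : hypPMF n 0 k i = 0 := by
          unfold hypPMF
          rw [Nat.choose_eq_zero_of_lt hi1]
          simp
        have h2 : binPMF k (((0:ℕ):ℝ)/n) i = 0 := by
          unfold binPMF
          rw [Nat.cast_zero, zero_div, zero_pow (by omega : i ≠ 0)]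
          ring
        rw [h1, h2]; simp
    rw [Finset.sum_congr rfl hz]
    simp
    positivity
  rcases Nat.lt_or_ge m n with hmn | hmn
  · exact TV14.main_bound hm1 hmn hk1 hk
  · have hme : m = n := by omega
    subst hme
    have hmR : (0:ℝ) < (m:ℝ) := by exact_mod_cast (by omega : 0 < m)
    have hp1 : ((m:ℝ))/m = 1 := div_self (ne_of_gt hmR)
    have hz : ∀ i ∈ Finset.range (k+1), |hypPMF m m k i - binPMF k ((m:ℝ)/m) i| = 0 := by
      intro i hi
      rw [Finset.mem_range] at hi
      rcases Nat.lt_or_ge i k with hik | hik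
      · have h1 : hypPMF m m k i = 0 := by
          unfold hypPMF
          rw [Nat.sub_self, Nat.choose_eq_zero_of_lt (by omega : 0 < k - i)]
          simp
        have h2 : binPMF k ((m:ℝ)/m) i = 0 := by
          unfold binPMF
          rw [hp1, show (1:ℝ) - 1 = 0 from by ring, zero_pow (by omega : k - i ≠ 0)]
          ring
        rw [h1, h2]; simp
      · have hie : i = k := by omega
        rw [hie]
        have hck : (0:ℝ) < (m.choose k : ℝ) := by exact_mod_cast Nat.choose_pos hk
        have h1 : hypPMF m m k k = 1 := by
          unfold hypPMF
          rw [Nat.sub_self, Nat.sub_self, Nat.choose_zero_right]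
          rw [Nat.cast_one, mul_one, div_self (ne_of_gt hck)]
        have h2 : binPMF k ((m:ℝ)/m) k = 1 := by
          unfold binPMF
          rw [hp1, Nat.choose_self, Nat.sub_self]
          norm_num
        rw [h1, h2]; simp
    rw [Finset.sum_congr rfl hz]
    simp
    positivity
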